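/- The limiting merge loss λ₂' ↦ Δ[λ₁,π₁;λ₂',∞] is non-decreasing in λ₂' for λ₂' ≥ λ₁, where for 0 < λ₁ < ∞: Δ[λ₁,π₁;λ₂',∞] = π₁(−(λ₁/(λ₁+1))log₂((1+1/λ₁)/(1+1/λ₂')) − (1/(λ₁+1))log₂((λ₁+1)/(λ₂'+1))), and Δ[λ₁,π₁;λ₁,∞] = 0. -/

import Mathlib

/-- Limiting merge loss `Δ[lam,pi; mu,∞]` for `0 < lam < ∞`. -/
noncomputable def deltaInf (lam pi mu : ℝ) : ℝ :=
  pi * (-(lam / (lam + 1)) * Real.logb 2 ((1 + 1 / lam) / (1 + 1 / mu))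
        - 1 / (lam + 1) * Real.logb 2 ((lam + 1) / (mu + 1)))

noncomputable def auxH (lam x : ℝ) : ℝ :=
  lam / (lam + 1) * Real.log (1 + 1 / x) + 1 / (lam + 1) * Real.log (x + 1)

lemma auxH_hasDerivAt (lam : ℝ) (hlam : 0 < lam) {x : ℝ} (hx : 0 < x) :
    HasDerivAt (auxH lam) ((x - lam) / ((lam + 1) * x * (x + 1))) x := by
  have hx1 : (0:ℝ) < 1 + 1 / x := by positivity
  have hx2 : (0:ℝ) < x + 1 := by linarith
  have h1 : HasDerivAt (fun y : ℝ => 1 + 1 / y) (-(x ^ 2)⁻¹) x := by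
    simpa [one_div] using (hasDerivAt_inv hx.ne').const_add 1
  have h2 : HasDerivAt (fun y : ℝ => Real.log (1 + 1 / y))
      (-(x ^ 2)⁻¹ / (1 + 1 / x)) x := h1.log hx1.ne'
  have h3 : HasDerivAt (fun y : ℝ => Real.log (y + 1)) (1 / (x + 1)) x := by
    simpa using ((hasDerivAt_id x).add_const 1).log hx2.ne'
  have h := (h2.const_mul (lam / (lam + 1))).add (h3.const_mul (1 / (lam + 1)))
  convert h using 1
  · rfl
  · rfl
  · rfl
  have hlam1 : lam + 1 ≠ 0 := by positivity
  field_simp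
  ring

lemma auxH_mono (lam : ℝ) (hlam : 0 < lam) : MonotoneOn (auxH lam) (Set.Ici lam) := by
  have hint : interior (Set.Ici lam) = Set.Ioi lam := interior_Ici
  apply monotoneOn_of_deriv_nonneg (convex_Ici lam)
  · intro x hx
    exact (auxH_hasDerivAt lam hlam (lt_of_lt_of_le hlam hx)).continuousAt.continuousWithinAt
  · rw [hint]
    intro x hx
    exact (auxH_hasDerivAt lam hlam (hlam.trans hx)).differentiableAt.differentiableWithinAt
  · rw [hint]
    intro x hx
    have hx' : lam < x := hx
    rw [(auxH_hasDerivAt lam hlam (hlam.trans hx')).deriv]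
    have h0 : (0:ℝ) < x := hlam.trans hx'
    have h1 : (0:ℝ) < (lam + 1) * x * (x + 1) := by positivity
    have h2 : (0:ℝ) ≤ x - lam := by linarith
    positivity

lemma deltaInf_eq (lam pi : ℝ) (hlam : 0 < lam) {mu : ℝ} (hmu : 0 < mu) :
    deltaInf lam pi mu = pi / Real.log 2 * (auxH lam mu - auxH lam lam) := by
  have h1 : (0:ℝ) < 1 + 1 / lam := by positivity
  have h2 : (0:ℝ) < 1 + 1 / mu := by positivity
  have h3 : (0:ℝ) < lam + 1 := by linarith
  have h4 : (0:ℝ) < mu + 1 := by linarith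
  have hlog2 : Real.log 2 ≠ 0 := ne_of_gt (Real.log_pos (by norm_num))
  unfold deltaInf auxH Real.logb
  rw [Real.log_div h1.ne' h2.ne', Real.log_div h3.ne' h4.ne']
  field_simp
  ring

/-- `mu ↦ Δ[lam₁,pi₁; mu,∞]` is non-decreasing on `[lam₁,∞)`,
and vanishes at `mu = lam₁`. -/
theorem deltaInf_monotone (lam₁ pi₁ : ℝ) (hlam : 0 < lam₁) (hpi : 0 < pi₁) :
    (∀ a b : ℝ, lam₁ ≤ a → a ≤ b → deltaInf lam₁ pi₁ a ≤ deltaInf lam₁ pi₁ b) ∧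
    deltaInf lam₁ pi₁ lam₁ = 0 := by
  constructor
  · intro a b ha hab
    have ha0 : 0 < a := lt_of_lt_of_le hlam ha
    have hb0 : 0 < b := lt_of_lt_of_le ha0 hab
    rw [deltaInf_eq lam₁ pi₁ hlam ha0, deltaInf_eq lam₁ pi₁ hlam hb0]
    have hc : 0 < pi₁ / Real.log 2 := by
      apply div_pos hpi
      exact Real.log_pos (by norm_num)
    have hH : auxH lam₁ a ≤ auxH lam₁ b :=
      auxH_mono lam₁ hlam ha (ha.trans hab) hab
    nlinarith
  · rw [deltaInf_eq lam₁ pi₁ hlam hlam]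
    simp
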